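/- Let ω ∈ ℝⁿ. The set E(ω) = { Hω : H symmetric n×n real matrix with Frobenius norm |H| ≤ 1 } equals the ellipsoid F(W(ω)) = { x ∈ ℝⁿ : x · W(ω)⁻¹ x ≤ 1 } when ω ≠ 0, where W(ω) = (1/2)(|ω|² I + ω⊗ω). In particular, for any symmetric matrix H, Hω ∈ |H|·F(W(ω)). -/

import Mathlib

open Matrix Pointwise

variable {n : ℕ}

private lemma prodsum (f g : Fin n → ℝ) :
    ∑ i, ∑ j, f i * g j = (∑ i, f i) * (∑ j, g j) := by
  rw [Finset.sum_mul_sum]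

private lemma hPP (ω : Fin n → ℝ) :
    (vecMulVec ω ω) * (vecMulVec ω ω) = (∑ i, ω i ^ 2) • vecMulVec ω ω := by
  ext i j
  simp only [Matrix.mul_apply, vecMulVec_apply, Matrix.smul_apply, smul_eq_mul]
  rw [Finset.sum_mul]
  exact Finset.sum_congr rfl fun k _ => by ring

private lemma hWinv (ω : Fin n → ℝ) (ha : 0 < ∑ i, ω i ^ 2) :
    ((1/2 : ℝ) • ((∑ i, ω i ^ 2) • (1 : Matrix (Fin n) (Fin n) ℝ) + vecMulVec ω ω))⁻¹
    = (2 / (∑ i, ω i ^ 2)) • (1 : Matrix (Fin n) (Fin n) ℝ)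
      - ((∑ i, ω i ^ 2) ^ 2)⁻¹ • vecMulVec ω ω := by
  set a := ∑ i, ω i ^ 2 with hadef
  have ha' : a ≠ 0 := ha.ne'
  apply Matrix.inv_eq_right_inv
  rw [Matrix.smul_mul, Matrix.add_mul, Matrix.mul_sub, Matrix.mul_sub]
  have key : (1/2:ℝ) • (a • (1:Matrix (Fin n) (Fin n) ℝ) * (2/a) • 1 - a • (1:Matrix (Fin n) (Fin n) ℝ) * (a^2)⁻¹ • vecMulVec ω ω + (vecMulVec ω ω * (2/a) • 1 - vecMulVec ω ω * (a^2)⁻¹ • vecMulVec ω ω))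
      = ((1/2)*(a*(2/a))) • (1:Matrix (Fin n) (Fin n) ℝ)
        + ((1/2)*((2/a) - (a^2)⁻¹*a - (a^2)⁻¹*a)) • vecMulVec ω ω := by
    simp only [Matrix.smul_mul, Matrix.mul_smul, Matrix.one_mul, Matrix.mul_one, hPP, ← hadef]
    module
  rw [key, show (1/2:ℝ)*(a*(2/a)) = 1 by field_simp,
    show (1/2:ℝ)*((2/a) - (a^2)⁻¹*a - (a^2)⁻¹*a) = 0 by field_simp; ring]
  simp

private lemma vmv_mulVec (ω x : Fin n → ℝ) (i : Fin n) :
    ((vecMulVec ω ω).mulVec x) i = ω i * ∑ j, ω j * x j := by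
  simp only [Matrix.mulVec, dotProduct, vecMulVec_apply, Finset.mul_sum]
  exact Finset.sum_congr rfl fun j _ => by ring

private lemma qform (ω x : Fin n → ℝ) (c d : ℝ) :
    ∑ i, x i * ((c • (1 : Matrix (Fin n) (Fin n) ℝ) - d • vecMulVec ω ω).mulVec x) i
    = c * (∑ i, x i ^ 2) - d * (∑ i, ω i * x i) ^ 2 := by
  have h : ∀ i, ((c • (1 : Matrix (Fin n) (Fin n) ℝ) - d • vecMulVec ω ω).mulVec x) i
      = c * x i - d * (ω i * ∑ j, ω j * x j) := by
    intro i
    rw [Matrix.sub_mulVec]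
    simp only [Pi.sub_apply, Matrix.smul_mulVec, Pi.smul_apply, Matrix.one_mulVec,
      smul_eq_mul, vmv_mulVec]
  calc ∑ i, x i * ((c • (1 : Matrix (Fin n) (Fin n) ℝ) - d • vecMulVec ω ω).mulVec x) i
      = ∑ i, (c * x i ^ 2 - (d * ∑ j, ω j * x j) * (ω i * x i)) := by
        refine Finset.sum_congr rfl fun i _ => ?_; rw [h]; ring
    _ = c * (∑ i, x i ^ 2) - d * (∑ i, ω i * x i) ^ 2 := by
        rw [Finset.sum_sub_distrib, ← Finset.mul_sum, ← Finset.mul_sum]; ring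

private lemma keyA (ω : Fin n → ℝ) (ha : 0 < ∑ i, ω i ^ 2) (H : Matrix (Fin n) (Fin n) ℝ)
    (hH : H.IsSymm) :
    2 * (∑ i, ω i ^ 2) * (∑ i, (H.mulVec ω) i ^ 2) - (∑ i, ω i * (H.mulVec ω) i) ^ 2
    ≤ (∑ i, ω i ^ 2) ^ 2 * ∑ i, ∑ j, H i j ^ 2 := by
  set a := ∑ i, ω i ^ 2 with hadef
  set z := H.mulVec ω with hzdef
  have hz : ∀ i, z i = ∑ j, H i j * ω j := fun i => rfl
  set s := ∑ i, ω i * z i with hsdef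
  set c := s / a with hcdef
  have hca : c * a = s := div_mul_cancel₀ s ha.ne'
  have e2 : ∑ i, ∑ j, H i j * (z i * ω j) = ∑ i, z i ^ 2 := by
    refine Finset.sum_congr rfl fun i _ => ?_
    rw [show ∑ j, H i j * (z i * ω j) = z i * ∑ j, H i j * ω j by
      rw [Finset.mul_sum]; exact Finset.sum_congr rfl fun j _ => by ring, ← hz]
    ring
  have e1 : ∑ i, ∑ j, H i j * (ω i * z j) = ∑ i, z i ^ 2 := by
    rw [Finset.sum_comm]
    refine Finset.sum_congr rfl fun j _ => ?_
    rw [show ∑ i, H i j * (ω i * z j) = z j * ∑ i, H j i * ω i by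
      rw [Finset.mul_sum]; exact Finset.sum_congr rfl fun i _ => by rw [hH.apply]; ring, ← hz]
    ring
  have e3 : ∑ i, ∑ j, H i j * (ω i * ω j) = s := by
    rw [hsdef]
    refine Finset.sum_congr rfl fun i _ => ?_
    rw [show ∑ j, H i j * (ω i * ω j) = ω i * ∑ j, H i j * ω j by
      rw [Finset.mul_sum]; exact Finset.sum_congr rfl fun j _ => by ring, ← hz]
  have h0 : (0:ℝ) ≤ ∑ i, ∑ j, (a * H i j - ω i * z j - z i * ω j + c * (ω i * ω j)) ^ 2 :=
    Finset.sum_nonneg fun i _ => Finset.sum_nonneg fun j _ => sq_nonneg _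
  have hexp : ∑ i, ∑ j, (a * H i j - ω i * z j - z i * ω j + c * (ω i * ω j)) ^ 2
      = a ^ 2 * (∑ i, ∑ j, H i j ^ 2) - 2 * a * (∑ i, z i ^ 2) + s ^ 2 := by
    calc ∑ i, ∑ j, (a * H i j - ω i * z j - z i * ω j + c * (ω i * ω j)) ^ 2
        = ∑ i, ∑ j, (a ^ 2 * H i j ^ 2
            + (-(2*a)) * (H i j * (ω i * z j))
            + (-(2*a)) * (H i j * (z i * ω j))
            + (2*a*c) * (H i j * (ω i * ω j))
            + (ω i ^ 2) * (z j ^ 2)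
            + (z i ^ 2) * (ω j ^ 2)
            + (c ^ 2 * ω i ^ 2) * (ω j ^ 2)
            + (2 * (ω i * z i)) * (ω j * z j)
            + ((-2*c) * ω i ^ 2) * (ω j * z j)
            + ((-2*c) * (ω i * z i)) * (ω j ^ 2)) := by
          exact Finset.sum_congr rfl fun i _ => Finset.sum_congr rfl fun j _ => by ring
      _ = a ^ 2 * (∑ i, ∑ j, H i j ^ 2) - 2 * a * (∑ i, z i ^ 2) + s ^ 2 := by
          simp only [Finset.sum_add_distrib]
          simp only [prodsum]
          simp only [← Finset.mul_sum]
          rw [e1, e2, e3, ← hsdef, ← hadef]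
          linear_combination (c * a - s) * hca
  nlinarith [h0, hexp]

private lemma keyB (ω x : Fin n → ℝ) (ha : 0 < ∑ i, ω i ^ 2) :
    ∃ H : Matrix (Fin n) (Fin n) ℝ, H.IsSymm
      ∧ (∑ i, ∑ j, H i j ^ 2)
          = (2 / (∑ i, ω i ^ 2)) * (∑ i, x i ^ 2)
            - ((∑ i, ω i ^ 2) ^ 2)⁻¹ * (∑ i, ω i * x i) ^ 2
      ∧ x = H.mulVec ω := by
  set a := ∑ i, ω i ^ 2 with hadef
  set s := ∑ i, ω i * x i with hsdef
  refine ⟨Matrix.of fun i j => (ω i * x j + x i * ω j) / a - s * (ω i * ω j) / a ^ 2,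
    ?_, ?_, ?_⟩
  · ext i j
    simp only [Matrix.transpose_apply, Matrix.of_apply]
    ring
  · calc ∑ i, ∑ j, ((ω i * x j + x i * ω j) / a - s * (ω i * ω j) / a ^ 2) ^ 2
        = ∑ i, ∑ j, (((1/a^2) * ω i ^ 2) * (x j ^ 2)
            + ((1/a^2) * x i ^ 2) * (ω j ^ 2)
            + ((s^2/a^4) * ω i ^ 2) * (ω j ^ 2)
            + ((2/a^2) * (ω i * x i)) * (ω j * x j)
            + ((-2*s/a^3) * ω i ^ 2) * (ω j * x j)
            + ((-2*s/a^3) * (ω i * x i)) * (ω j ^ 2)) := by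
          exact Finset.sum_congr rfl fun i _ => Finset.sum_congr rfl fun j _ => by ring
      _ = (2 / a) * (∑ i, x i ^ 2) - (a ^ 2)⁻¹ * s ^ 2 := by
          simp only [Finset.sum_add_distrib]
          simp only [prodsum]
          simp only [← Finset.mul_sum]
          rw [← hadef, ← hsdef]
          field_simp
          ring
  · funext i
    show x i = ∑ j, ((ω i * x j + x i * ω j) / a - s * (ω i * ω j) / a ^ 2) * ω j
    calc x i = (1/a) * (ω i * s) + (x i / a) * a - (s * ω i / a^2) * a := by
          field_simp
          ring
      _ = ∑ j, ((ω i * x j + x i * ω j) / a - s * (ω i * ω j) / a ^ 2) * ω j := by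
          rw [hsdef, hadef, Finset.mul_sum, Finset.mul_sum, Finset.mul_sum, Finset.mul_sum,
            ← Finset.sum_add_distrib, ← Finset.sum_sub_distrib]
          exact Finset.sum_congr rfl fun j _ => by ring

theorem stmt3 {n : ℕ} (ω : Fin n → ℝ) :
    let W : Matrix (Fin n) (Fin n) ℝ :=
      (1/2 : ℝ) • ((∑ i, ω i ^ 2) • (1 : Matrix (Fin n) (Fin n) ℝ) + vecMulVec ω ω)
    let F : Set (Fin n → ℝ) := {x | ∑ i, x i * (W⁻¹).mulVec x i ≤ 1}
    (ω ≠ 0 →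
      {x | ∃ H : Matrix (Fin n) (Fin n) ℝ,
          H.IsSymm ∧ (∑ i, ∑ j, H i j ^ 2) ≤ 1 ∧ x = H.mulVec ω} = F)
    ∧ ∀ H : Matrix (Fin n) (Fin n) ℝ, H.IsSymm →
        H.mulVec ω ∈ Real.sqrt (∑ i, ∑ j, H i j ^ 2) • F := by
  intro W F
  have hFzero : (0 : Fin n → ℝ) ∈ F := by
    show ∑ i, (0 : Fin n → ℝ) i * (W⁻¹).mulVec 0 i ≤ 1
    simp
  constructor
  · intro hω
    have ha : 0 < ∑ i, ω i ^ 2 := by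
      obtain ⟨i, hi⟩ := Function.ne_iff.mp hω
      exact Finset.sum_pos' (fun j _ => sq_nonneg _)
        ⟨i, Finset.mem_univ i, pow_two_pos_of_ne_zero (by simpa using hi)⟩
    have hW : W⁻¹ = (2 / (∑ i, ω i ^ 2)) • (1 : Matrix (Fin n) (Fin n) ℝ)
        - ((∑ i, ω i ^ 2) ^ 2)⁻¹ • vecMulVec ω ω := hWinv ω ha
    ext x
    constructor
    · rintro ⟨H, hs, hle, rfl⟩
      show ∑ i, (H.mulVec ω) i * (W⁻¹).mulVec (H.mulVec ω) i ≤ 1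
      rw [hW, qform]
      have hk := keyA ω ha H hs
      have h2 : (2 / (∑ i, ω i ^ 2)) * (∑ i, (H.mulVec ω) i ^ 2)
          - ((∑ i, ω i ^ 2) ^ 2)⁻¹ * (∑ i, ω i * (H.mulVec ω) i) ^ 2
          = (2 * (∑ i, ω i ^ 2) * (∑ i, (H.mulVec ω) i ^ 2)
              - (∑ i, ω i * (H.mulVec ω) i) ^ 2) / (∑ i, ω i ^ 2) ^ 2 := by
        field_simp
      rw [h2, div_le_one (by positivity)]
      have h3 := mul_le_mul_of_nonneg_left hle (by positivity : (0:ℝ) ≤ (∑ i, ω i ^ 2) ^ 2)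
      linarith
    · intro hx
      have hx' : ∑ i, x i * (W⁻¹).mulVec x i ≤ 1 := hx
      rw [hW, qform] at hx'
      obtain ⟨H, h1, h2, h3⟩ := keyB ω x ha
      exact ⟨H, h1, by rw [h2]; exact hx', h3⟩
  · intro H hs
    have hA0 : 0 ≤ ∑ i, ∑ j, H i j ^ 2 :=
      Finset.sum_nonneg fun i _ => Finset.sum_nonneg fun j _ => sq_nonneg _
    rcases eq_or_lt_of_le hA0 with h | h
    · have hij : ∀ i j, H i j = 0 := by
        intro i j
        have h1 : ∀ i ∈ Finset.univ, ∑ j, H i j ^ 2 = 0 :=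
          (Finset.sum_eq_zero_iff_of_nonneg
            (fun i _ => Finset.sum_nonneg fun j _ => sq_nonneg _)).mp h.symm
        have h2 : ∀ j ∈ Finset.univ, H i j ^ 2 = 0 :=
          (Finset.sum_eq_zero_iff_of_nonneg (fun j _ => sq_nonneg _)).mp
            (h1 i (Finset.mem_univ i))
        exact pow_eq_zero_iff (by norm_num) |>.mp (h2 j (Finset.mem_univ j))
      have hz : H.mulVec ω = 0 := by
        funext i
        simp [Matrix.mulVec, dotProduct, hij]
      rw [hz, ← h, Real.sqrt_zero]
      exact Set.mem_smul_set.mpr ⟨0, hFzero, smul_zero 0⟩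
    · set c := Real.sqrt (∑ i, ∑ j, H i j ^ 2) with hcdef
      have hc : 0 < c := Real.sqrt_pos.mpr h
      have hc2 : c ^ 2 = ∑ i, ∑ j, H i j ^ 2 := Real.sq_sqrt hA0
      refine Set.mem_smul_set.mpr ⟨c⁻¹ • H.mulVec ω, ?_, by
        simp [smul_smul, mul_inv_cancel₀ hc.ne']⟩
      by_cases hω : ω = 0
      · subst hω
        have : H.mulVec 0 = 0 := Matrix.mulVec_zero H
        rw [this, smul_zero]
        exact hFzero
      · have ha : 0 < ∑ i, ω i ^ 2 := by
          obtain ⟨i, hi⟩ := Function.ne_iff.mp hω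
          exact Finset.sum_pos' (fun j _ => sq_nonneg _)
            ⟨i, Finset.mem_univ i, pow_two_pos_of_ne_zero (by simpa using hi)⟩
        show ∑ i, (c⁻¹ • H.mulVec ω) i * (W⁻¹).mulVec (c⁻¹ • H.mulVec ω) i ≤ 1
        rw [hWinv ω ha, qform]
        have e1 : ∑ i, (c⁻¹ • H.mulVec ω) i ^ 2 = c⁻¹ ^ 2 * ∑ i, (H.mulVec ω) i ^ 2 := by
          rw [Finset.mul_sum]
          exact Finset.sum_congr rfl fun i _ => by
            simp only [Pi.smul_apply, smul_eq_mul]; ring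
        have e2 : ∑ i, ω i * (c⁻¹ • H.mulVec ω) i = c⁻¹ * ∑ i, ω i * (H.mulVec ω) i := by
          rw [Finset.mul_sum]
          exact Finset.sum_congr rfl fun i _ => by
            simp only [Pi.smul_apply, smul_eq_mul]; ring
        rw [e1, e2]
        have hk := keyA ω ha H hs
        have heq : (2 / (∑ i, ω i ^ 2)) * (c⁻¹ ^ 2 * ∑ i, (H.mulVec ω) i ^ 2)
            - ((∑ i, ω i ^ 2) ^ 2)⁻¹ * (c⁻¹ * ∑ i, ω i * (H.mulVec ω) i) ^ 2
            = (2 * (∑ i, ω i ^ 2) * (∑ i, (H.mulVec ω) i ^ 2)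
                - (∑ i, ω i * (H.mulVec ω) i) ^ 2) / ((∑ i, ω i ^ 2) ^ 2 * c ^ 2) := by
          field_simp
        rw [heq, div_le_one (by positivity)]
        rw [hc2]
        nlinarith [hk]
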